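/- For every k ∈ ℕ and every vertex i ∈ V, the max-consensus iterate satisfies w(k)(i) = max{ w0(j) : j ∈ V, j is reachable from i in Γ, and dist(i, j) ≤ k }, where the maximum is over the (nonempty, since it contains i itself) finite set of such vertices j. -/

import Mathlib

/-- the max-consensus iterate `w k i` is the maximum of `w0 j` over
the vertices `j` reachable from `i` within graph distance `k`. -/
theorem stmt_9 (V : Type*) [Fintype V] [DecidableEq V] [Nonempty V]
    (Γ : SimpleGraph V) [DecidableRel Γ.Adj]
    (w0 : V → ℝ) (w : ℕ → V → ℝ)
    (hw0 : w 0 = w0)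
    (hwk : ∀ (k : ℕ) (i : V), w (k + 1) i =
      (insert i (Γ.neighborFinset i)).sup' (Finset.insert_nonempty i _) (w k))
    (k : ℕ) (i : V) :
    IsGreatest {x : ℝ | ∃ j : V, Γ.Reachable i j ∧ Γ.dist i j ≤ k ∧ w0 j = x} (w k i) := by
  induction k generalizing i with
  | zero =>
    constructor
    · exact ⟨i, SimpleGraph.Reachable.refl i, by simp [SimpleGraph.dist_self], by rw [hw0]⟩
    · rintro x ⟨j, hreach, hdist, rfl⟩
      have hj : i = j := by
        have := (SimpleGraph.Reachable.dist_eq_zero_iff hreach).mp (Nat.le_zero.mp hdist)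
        exact this
      rw [hw0, hj]
  | succ k ih =>
    constructor
    · -- membership
      rw [hwk]
      obtain ⟨a, ha, hsup⟩ := Finset.exists_mem_eq_sup' (Finset.insert_nonempty i (Γ.neighborFinset i)) (w k)
      obtain ⟨⟨j, hreach, hdist, hj⟩, _⟩ := ih a
      obtain ⟨q, hq⟩ := hreach.exists_walk_length_eq_dist
      rcases Finset.mem_insert.mp ha with rfl | hadj
      · refine ⟨j, hreach, ?_, by rw [hj, ← hsup]⟩
        have h1 := SimpleGraph.dist_le q
        omega
      · have hadj' : Γ.Adj i a := (SimpleGraph.mem_neighborFinset Γ i a).mp hadj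
        refine ⟨j, hadj'.reachable.trans hreach, ?_, by rw [hj, ← hsup]⟩
        have h1 := SimpleGraph.dist_le (SimpleGraph.Walk.cons hadj' q)
        rw [SimpleGraph.Walk.length_cons, hq] at h1
        omega
    · -- upper bound
      rintro x ⟨j, hreach, hdist, rfl⟩
      rw [hwk]
      obtain ⟨p, hp⟩ := hreach.exists_walk_length_eq_dist
      cases p with
      | nil =>
        have : w0 i ≤ w k i := (ih i).2 ⟨i, SimpleGraph.Reachable.refl i, by simp [SimpleGraph.dist_self], rfl⟩
        calc w0 i ≤ w k i := this
          _ ≤ _ := Finset.le_sup' (w k) (Finset.mem_insert_self i _)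
      | cons h q =>
        rename_i a
        have hq : q.length ≤ k := by
          have : q.length + 1 ≤ k + 1 := by
            rw [← SimpleGraph.Walk.length_cons h q, hp]; exact hdist
          omega
        have hdaj : Γ.dist a j ≤ k := le_trans (SimpleGraph.dist_le q) hq
        have : w0 j ≤ w k a := (ih a).2 ⟨j, q.reachable, hdaj, rfl⟩
        calc w0 j ≤ w k a := this
          _ ≤ _ := Finset.le_sup' (w k)
              (Finset.mem_insert_of_mem ((SimpleGraph.mem_neighborFinset Γ i a).mpr h))
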